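/- Every (r,r+1;5)-balanced biregular graph has order divisible by 4; consequently, for r > 2, n_bb(r,r+1;5) ≥ r² + r + 4 if r ≡ 0 or 3 (mod 4), and n_bb(r,r+1;5) ≥ r² + r + 6 if r ≡ 1 or 2 (mod 4). -/

import Mathlib

open SimpleGraph Set

/-- The degree of a vertex, via the natural cardinality of its neighbor set. -/
noncomputable def deg {V : Type*} (G : SimpleGraph V) (v : V) : ℕ :=
  (G.neighborSet v).ncard

/-- Number of edges both of whose endpoints have degree `d`. -/
noncomputable def edgeCountDeg {V : Type*} (G : SimpleGraph V) (d : ℕ) : ℕ :=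
  {e ∈ G.edgeSet | ∀ v ∈ e, deg G v = d}.ncard

/-- An `(r,s;g)`-balanced biregular graph: girth `g`, degree set exactly `{r, s}`,
and equally many vertices of degree `r` as of degree `s`. -/
def IsBabi {V : Type*} (r s g : ℕ) (G : SimpleGraph V) : Prop :=
  G.girth = g ∧ (∀ v, deg G v = r ∨ deg G v = s) ∧
  (∃ v, deg G v = r) ∧ (∃ v, deg G v = s) ∧
  {v | deg G v = r}.ncard = {v | deg G v = s}.ncard

section Aux
variable {V : Type*} {G : SimpleGraph V}

lemma girth5_cycle_len (h : G.girth = 5) {a : V} (w : G.Walk a a) (hw : w.IsCycle) :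
    5 ≤ w.length := by
  have hne : G.egirth ≠ ⊤ := by
    intro ht
    rw [SimpleGraph.egirth_eq_top] at ht
    rw [ht.girth_eq_zero] at h
    omega
  have h5 : G.egirth = (5 : ℕ∞) := by
    have : ((G.girth : ℕ∞)) = ((5 : ℕ) : ℕ∞) := by exact_mod_cast congrArg Nat.cast h
    rwa [SimpleGraph.girth, ENat.coe_toNat hne] at this
  have hle : G.egirth ≤ w.length := by
    rw [SimpleGraph.egirth]
    exact le_trans (iInf_le _ a) (le_trans (iInf_le _ w) (iInf_le _ hw))
  rw [h5] at hle
  exact_mod_cast hle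

lemma no_triangle (h : G.girth = 5) {a b c : V} (hab : G.Adj a b) (hbc : G.Adj b c)
    (hca : G.Adj c a) : False := by
  classical
  have h1 : a ≠ b := hab.ne
  have h2 : b ≠ c := hbc.ne
  have h3 : c ≠ a := hca.ne
  let w : G.Walk a a := .cons hab (.cons hbc (.cons hca .nil))
  have hw : w.IsCycle := by
    rw [SimpleGraph.Walk.isCycle_def]
    refine ⟨⟨?_⟩, ?_, ?_⟩
    · simp only [w, SimpleGraph.Walk.edges_cons, SimpleGraph.Walk.edges_nil, List.nodup_cons,
        List.mem_cons, List.mem_singleton, List.not_mem_nil, List.nodup_nil, Sym2.eq_iff,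
        and_true, not_or]
      tauto
    · simp [w]
    · simp only [w, SimpleGraph.Walk.support_cons, SimpleGraph.Walk.support_nil, List.tail_cons,
        List.nodup_cons, List.mem_cons, List.mem_singleton, List.not_mem_nil, List.nodup_nil,
        and_true, not_or]
      tauto
  have := girth5_cycle_len h w hw
  simp [w] at this

lemma no_c4 (h : G.girth = 5) {a b c d : V} (hab : G.Adj a b) (hbc : G.Adj b c)
    (hcd : G.Adj c d) (hda : G.Adj d a) (hac : a ≠ c) (hbd : b ≠ d) : False := by
  classical
  have h1 : a ≠ b := hab.ne
  have h2 : b ≠ c := hbc.ne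
  have h3 : c ≠ d := hcd.ne
  have h4 : d ≠ a := hda.ne
  let w : G.Walk a a := .cons hab (.cons hbc (.cons hcd (.cons hda .nil)))
  have hw : w.IsCycle := by
    rw [SimpleGraph.Walk.isCycle_def]
    refine ⟨⟨?_⟩, ?_, ?_⟩
    · simp only [w, SimpleGraph.Walk.edges_cons, SimpleGraph.Walk.edges_nil, List.nodup_cons,
        List.mem_cons, List.mem_singleton, List.not_mem_nil, List.nodup_nil, Sym2.eq_iff,
        and_true, not_or]
      tauto
    · simp [w]
    · simp only [w, SimpleGraph.Walk.support_cons, SimpleGraph.Walk.support_nil, List.tail_cons,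
        List.nodup_cons, List.mem_cons, List.mem_singleton, List.not_mem_nil, List.nodup_nil,
        and_true, not_or]
      tauto
  have := girth5_cycle_len h w hw
  simp [w] at this

lemma deg_eq_degree [Fintype V] [DecidableRel G.Adj] (v : V) : deg G v = G.degree v := by
  classical
  rw [deg, ← SimpleGraph.card_neighborFinset_eq_degree, SimpleGraph.neighborFinset_def,
    Set.ncard_eq_toFinset_card']

variable [Fintype V] [DecidableEq V] [DecidableRel G.Adj]

/-- the distance ≤ 2 ball around `u`, as a Finset. -/
def ballF (G : SimpleGraph V) [Fintype V] [DecidableEq V] [DecidableRel G.Adj] (u : V) :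
    Finset V :=
  insert u ((G.neighborFinset u) ∪
    (G.neighborFinset u).biUnion (fun w => G.neighborFinset w \ {u}))

lemma ballF_card (h5 : G.girth = 5) (u : V) :
    (ballF G u).card = 1 + G.degree u + ∑ w ∈ G.neighborFinset u, (G.degree w - 1) := by
  classical
  set N := G.neighborFinset u with hN
  set B := N.biUnion (fun w => G.neighborFinset w \ {u}) with hB
  have hcardB : B.card = ∑ w ∈ N, (G.degree w - 1) := by
    rw [hB, Finset.card_biUnion]
    · refine Finset.sum_congr rfl fun w hw => ?_
      have hu : u ∈ G.neighborFinset w := by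
        rw [SimpleGraph.mem_neighborFinset] at hw ⊢
        exact hw.symm
      rw [Finset.card_sdiff_of_subset (by simpa using hu), Finset.card_singleton,
        SimpleGraph.card_neighborFinset_eq_degree]
    · intro x hx y hy hxy
      rw [Function.onFun, Finset.disjoint_left]
      intro z hzx hzy
      simp only [Finset.mem_sdiff, SimpleGraph.mem_neighborFinset, Finset.mem_singleton] at hzx hzy
      rw [hN, Finset.mem_coe, SimpleGraph.mem_neighborFinset] at hx hy
      exact no_c4 h5 hx hzx.1 hzy.1.symm hy.symm (fun he => hzx.2 he.symm) hxy
  have hNB : Disjoint N B := by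
    rw [Finset.disjoint_left]
    intro x hxN hxB
    rw [hB, Finset.mem_biUnion] at hxB
    obtain ⟨w, hw, hxw⟩ := hxB
    simp only [Finset.mem_sdiff, SimpleGraph.mem_neighborFinset, Finset.mem_singleton] at hxw
    rw [hN, SimpleGraph.mem_neighborFinset] at hxN hw
    exact no_triangle h5 hw hxw.1 hxN.symm
  have huNB : u ∉ N ∪ B := by
    rw [Finset.mem_union]
    rintro (hu | hu)
    · rw [hN, SimpleGraph.mem_neighborFinset] at hu
      exact G.loopless.irrefl u hu
    · rw [hB, Finset.mem_biUnion] at hu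
      obtain ⟨w, hw, hxw⟩ := hu
      simp at hxw
  rw [ballF]
  rw [Finset.card_insert_of_notMem huNB, Finset.card_union_of_disjoint hNB,
    hcardB, hN, SimpleGraph.card_neighborFinset_eq_degree]
  ring

lemma ball_count (h5 : G.girth = 5) (u : V) :
    1 + G.degree u + ∑ w ∈ G.neighborFinset u, (G.degree w - 1) ≤ Fintype.card V := by
  rw [← ballF_card h5 u]
  exact Finset.card_le_univ _

end Aux

section Babi
variable {n r : ℕ} {G : SimpleGraph (Fin n)}

lemma babi_div4 (h : IsBabi r (r + 1) 5 G) : 4 ∣ n := by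
  classical
  obtain ⟨hg, hdic, -, -, hbal⟩ := h
  set Bf := Finset.univ.filter (fun v => deg G v = r) with hBf
  set A := Finset.univ.filter (fun v => deg G v = r + 1) with hA
  have hsetB : {v | deg G v = r} = ↑Bf := by ext v; simp [hBf]
  have hsetA : {v | deg G v = r + 1} = ↑A := by ext v; simp [hA]
  rw [hsetB, hsetA, Set.ncard_coe_finset, Set.ncard_coe_finset] at hbal
  have hAC : A = Finset.univ.filter (fun v => ¬ deg G v = r) := by
    rw [hA]
    apply Finset.filter_congr
    intro v _
    rcases hdic v with h | h <;> simp [h]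
  have hsum : Bf.card + A.card = n := by
    rw [hBf, hAC, Finset.card_filter_add_card_filter_not, Finset.card_univ,
      Fintype.card_fin]
  have heven : Even Bf.card := by
    have hh := SimpleGraph.even_card_odd_degree_vertices G
    rcases Nat.even_or_odd r with hr | hr
    · have hfe : (Finset.univ.filter fun v => Odd (G.degree v)) = A := by
        rw [hA]
        apply Finset.filter_congr
        intro v _
        rw [← deg_eq_degree]
        rcases hdic v with h | h <;> simp [h] <;> simp [Nat.odd_add_one, Nat.not_odd_iff_even, hr]
      rw [hfe] at hh
      rwa [hbal]
    · have hfe : (Finset.univ.filter fun v => Odd (G.degree v)) = Bf := by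
        rw [hBf]
        apply Finset.filter_congr
        intro v _
        rw [← deg_eq_degree]
        rcases hdic v with h | h <;> simp [h] <;> simp [Nat.odd_add_one, Nat.not_odd_iff_even, hr,
          Nat.not_even_iff_odd]
      rwa [hfe] at hh
  obtain ⟨m, hm⟩ := heven
  omega

lemma babi_moore (h : IsBabi r (r + 1) 5 G) : r ^ 2 + r + 1 ≤ n := by
  classical
  obtain ⟨hg, hdic, -, ⟨v, hv⟩, -⟩ := h
  have hb := ball_count (G := G) hg v
  rw [deg_eq_degree] at hv
  have hsum : (r + 1) * (r - 1) ≤ ∑ w ∈ G.neighborFinset v, (G.degree w - 1) := by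
    calc (r + 1) * (r - 1) = ∑ _w ∈ G.neighborFinset v, (r - 1) := by
          rw [Finset.sum_const, smul_eq_mul, SimpleGraph.card_neighborFinset_eq_degree, hv]
      _ ≤ _ := by
          apply Finset.sum_le_sum
          intro w _
          rcases hdic w with h | h <;> rw [deg_eq_degree] at h <;> omega
  rw [Fintype.card_fin, hv] at hb
  rcases Nat.eq_zero_or_pos r with hr | hr
  · subst hr; omega
  · obtain ⟨r1, rfl⟩ : ∃ r1, r = r1 + 1 := ⟨r - 1, by omega⟩
    have hexp : (r1 + 1 + 1) * (r1 + 1 - 1) = r1 * r1 + 2 * r1 := by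
      simp; ring
    have hpow : (r1 + 1) ^ 2 = r1 * r1 + 2 * r1 + 1 := by ring
    omega


set_option maxHeartbeats 2000000 in
lemma babi_ne (hr : 3 < r) (h : IsBabi r (r + 1) 5 G) : n ≠ r ^ 2 + r + 2 := by
  classical
  intro hn
  obtain ⟨hg, hdic, ⟨u0, hu0⟩, -, hbal⟩ := h
  set Bf := Finset.univ.filter (fun v => deg G v = r) with hBf
  set A := Finset.univ.filter (fun v => deg G v = r + 1) with hA
  have hsetB : {v | deg G v = r} = ↑Bf := by ext v; simp [hBf]
  have hsetA : {v | deg G v = r + 1} = ↑A := by ext v; simp [hA]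
  rw [hsetB, hsetA, Set.ncard_coe_finset, Set.ncard_coe_finset] at hbal
  have hAC : A = Finset.univ.filter (fun v => ¬ deg G v = r) := by
    rw [hA]
    apply Finset.filter_congr
    intro v _
    rcases hdic v with h | h <;> simp [h]
  have hsum : Bf.card + A.card = n := by
    rw [hBf, hAC, Finset.card_filter_add_card_filter_not, Finset.card_univ,
      Fintype.card_fin]
  set a := A.card with ha
  -- f v = number of neighbors of v of degree r+1 ; g v = of degree r
  set f : Fin n → ℕ := fun v => ((G.neighborFinset v).filter (fun w => deg G w = r + 1)).card
    with hf
  set g : Fin n → ℕ := fun v => ((G.neighborFinset v).filter (fun w => deg G w = r)).card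
    with hg2
  have hfg : ∀ v, f v + g v = G.degree v := by
    intro v
    rw [hf, hg2]
    simp only
    have heq : (G.neighborFinset v).filter (fun w => deg G w = r)
        = (G.neighborFinset v).filter (fun w => ¬ deg G w = r + 1) := by
      apply Finset.filter_congr
      intro w _
      rcases hdic w with h | h <;> simp [h]
    rw [heq, Finset.card_filter_add_card_filter_not,
      SimpleGraph.card_neighborFinset_eq_degree]
  -- step (i) : every degree-(r+1) vertex has at most one neighbor of degree r+1
  have hf1 : ∀ v ∈ A, f v ≤ 1 := by
    intro v hv
    by_contra hcon
    push_neg at hcon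
    have hvdeg : deg G v = r + 1 := by
      rw [hA] at hv; simpa using hv
    have hvdeg' : G.degree v = r + 1 := by rw [← deg_eq_degree]; exact hvdeg
    have hsum2 : (r + 1) * (r - 1) + f v ≤ ∑ w ∈ G.neighborFinset v, (G.degree w - 1) := by
      have hpt : ∀ w ∈ G.neighborFinset v,
          (r - 1) + (if deg G w = r + 1 then 1 else 0) ≤ G.degree w - 1 := by
        intro w _
        have h' := deg_eq_degree (G := G) w
        rcases hdic w with h | h <;> split_ifs <;> omega
      have hfv' : f v = ∑ w ∈ G.neighborFinset v, (if deg G w = r + 1 then 1 else 0) := by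
        show ((G.neighborFinset v).filter (fun w => deg G w = r + 1)).card = _
        rw [Finset.card_filter]
      calc (r + 1) * (r - 1) + f v
          = ∑ w ∈ G.neighborFinset v, ((r - 1) + (if deg G w = r + 1 then 1 else 0)) := by
            rw [Finset.sum_add_distrib, Finset.sum_const, smul_eq_mul,
              SimpleGraph.card_neighborFinset_eq_degree, hvdeg', hfv']
        _ ≤ _ := Finset.sum_le_sum hpt
    have hb := ball_count (G := G) hg v
    rw [Fintype.card_fin, hvdeg'] at hb
    have hq : (r + 1) * (r - 1) + 1 = r ^ 2 := by
      have h1 : r - 1 + 1 = r := by omega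
      nlinarith [h1]
    linarith
  -- double counting edges between the classes
  have hswap : ∑ v ∈ A, g v = ∑ w ∈ Bf, f w := by
    have hgv : ∀ v, g v = ∑ w ∈ Bf, if G.Adj v w then 1 else 0 := by
      intro v
      show ((G.neighborFinset v).filter (fun w => deg G w = r)).card = _
      rw [Finset.card_filter, hBf, Finset.sum_filter, SimpleGraph.neighborFinset_eq_filter,
        Finset.sum_filter]
      apply Finset.sum_congr rfl
      intro w _
      by_cases h1 : G.Adj v w <;> by_cases h2 : deg G w = r <;> simp [h1, h2]
    have hfv : ∀ v, f v = ∑ w ∈ A, if G.Adj v w then 1 else 0 := by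
      intro v
      show ((G.neighborFinset v).filter (fun w => deg G w = r + 1)).card = _
      rw [Finset.card_filter, hA, Finset.sum_filter, SimpleGraph.neighborFinset_eq_filter,
        Finset.sum_filter]
      apply Finset.sum_congr rfl
      intro w _
      by_cases h1 : G.Adj v w <;> by_cases h2 : deg G w = r + 1 <;> simp [h1, h2]
    calc ∑ v ∈ A, g v = ∑ v ∈ A, ∑ w ∈ Bf, if G.Adj v w then 1 else 0 :=
          Finset.sum_congr rfl fun v _ => hgv v
      _ = ∑ w ∈ Bf, ∑ v ∈ A, if G.Adj w v then 1 else 0 := by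
          rw [Finset.sum_comm]
          apply Finset.sum_congr rfl
          intro w _
          apply Finset.sum_congr rfl
          intro v _
          simp [SimpleGraph.adj_comm]
      _ = ∑ w ∈ Bf, f w := Finset.sum_congr rfl fun w _ => (hfv w).symm
  have hdegA : ∑ v ∈ A, (f v + g v) = a * (r + 1) := by
    calc ∑ v ∈ A, (f v + g v) = ∑ v ∈ A, (r + 1) := by
          apply Finset.sum_congr rfl
          intro v hv
          rw [hfg v, ← deg_eq_degree]
          rw [hA] at hv; simpa using hv
      _ = a * (r + 1) := by rw [Finset.sum_const, smul_eq_mul, ha]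
  have hdegB : ∑ v ∈ Bf, (f v + g v) = a * r := by
    calc ∑ v ∈ Bf, (f v + g v) = ∑ v ∈ Bf, r := by
          apply Finset.sum_congr rfl
          intro v hv
          rw [hfg v, ← deg_eq_degree]
          rw [hBf] at hv; simpa using hv
      _ = a * r := by rw [Finset.sum_const, smul_eq_mul, hbal]
  rw [Finset.sum_add_distrib] at hdegA hdegB
  have hfA_le : ∑ v ∈ A, f v ≤ a := by
    calc ∑ v ∈ A, f v ≤ ∑ v ∈ A, 1 := Finset.sum_le_sum hf1
      _ = a := by rw [Finset.sum_const, smul_eq_mul, mul_one]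
  have h1 : a * (r + 1) = a * r + a := by ring
  have hBg0 : ∑ v ∈ Bf, g v = 0 := by
    have hle : ∑ v ∈ Bf, g v ≤ 0 := by linarith
    omega
  have hAf : ∑ v ∈ A, f v = a := by linarith
  have hBindep : ∀ v ∈ Bf, g v = 0 := by
    intro v hv
    have := (Finset.sum_eq_zero_iff.mp hBg0) v hv
    exact this
  have hAone : ∀ v ∈ A, f v = 1 := by
    by_contra hcon
    push_neg at hcon
    obtain ⟨v, hv, hv1⟩ := hcon
    have hlt : ∑ v ∈ A, f v < ∑ v ∈ A, 1 := by
      apply Finset.sum_lt_sum hf1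
      exact ⟨v, hv, by have := hf1 v hv; omega⟩
    rw [Finset.sum_const, smul_eq_mul, mul_one, ← ha] at hlt
    omega
  -- step (iii): count A-vertices near a degree-r vertex u0
  have hu0B : u0 ∈ Bf := by rw [hBf]; simp [hu0]
  have hu0deg : G.degree u0 = r := by rw [← deg_eq_degree]; exact hu0
  have hgu0 : g u0 = 0 := hBindep u0 hu0B
  have hneigh : ∀ w ∈ G.neighborFinset u0, deg G w = r + 1 := by
    intro w hw
    rcases hdic w with hcase | hcase
    · exfalso
      have hmem : w ∈ (G.neighborFinset u0).filter (fun w => deg G w = r) := by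
        simp [Finset.mem_filter, hw, hcase]
      have hgu0' : ((G.neighborFinset u0).filter (fun w => deg G w = r)).card = 0 := hgu0
      rw [Finset.card_eq_zero] at hgu0'
      rw [hgu0'] at hmem
      simp at hmem
    · exact hcase
  set N := G.neighborFinset u0 with hN
  have hNcard : N.card = r := by rw [hN, SimpleGraph.card_neighborFinset_eq_degree, hu0deg]
  -- ball size
  have hball : (ballF G u0).card = r * r + r + 1 := by
    rw [ballF_card hg u0, hu0deg]
    have : ∑ w ∈ G.neighborFinset u0, (G.degree w - 1) = ∑ w ∈ G.neighborFinset u0, r := by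
      apply Finset.sum_congr rfl
      intro w hw
      have := hneigh w hw
      rw [← deg_eq_degree] at *
      omega
    rw [this, Finset.sum_const, smul_eq_mul, ← hN, hNcard]
    ring
  -- vertices of A outside the ball: at most n - ball.card
  have houtside : (A \ ballF G u0).card ≤ 1 := by
    have h1 : (A \ ballF G u0).card ≤ (Finset.univ \ ballF G u0).card :=
      Finset.card_le_card (Finset.sdiff_subset_sdiff (Finset.subset_univ A) le_rfl)
    have h2 : (Finset.univ \ ballF G u0).card + (ballF G u0).card = n := by
      rw [Finset.card_sdiff_add_card_eq_card (Finset.subset_univ _), Finset.card_univ,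
        Fintype.card_fin]
    have hpow : r ^ 2 = r * r := by ring
    rw [hball] at h2
    linarith [hn.ge, hn.le]
  -- vertices of A inside the ball
  have hinside : (A ∩ ballF G u0).card ≤ 1 + r + r := by
    set C := N.biUnion (fun w => (G.neighborFinset w \ {u0}).filter (fun x => deg G x = r + 1))
      with hC
    have hsubset : A ∩ ballF G u0 ⊆ insert u0 (N ∪ C) := by
      intro x hx
      rw [Finset.mem_inter] at hx
      obtain ⟨hxA, hxball⟩ := hx
      rw [ballF, Finset.mem_insert, Finset.mem_union] at hxball
      rw [Finset.mem_insert, Finset.mem_union]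
      rcases hxball with h1 | h1 | h1
      · exact Or.inl h1
      · exact Or.inr (Or.inl h1)
      · right; right
        rw [Finset.mem_biUnion] at h1 ⊢
        obtain ⟨w, hw, hxw⟩ := h1
        refine ⟨w, hw, ?_⟩
        rw [Finset.mem_filter]
        refine ⟨hxw, ?_⟩
        rw [hA] at hxA; simpa using hxA
    have hCcard : C.card ≤ r := by
      calc C.card ≤ ∑ w ∈ N, ((G.neighborFinset w \ {u0}).filter
            (fun x => deg G x = r + 1)).card := Finset.card_biUnion_le
        _ ≤ ∑ w ∈ N, 1 := by
            apply Finset.sum_le_sum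
            intro w hw
            have hwA : w ∈ A := by
              rw [hA]; simp [hneigh w hw]
            have hfw : ((G.neighborFinset w).filter (fun x => deg G x = r + 1)).card = 1 :=
              hAone w hwA
            calc ((G.neighborFinset w \ {u0}).filter (fun x => deg G x = r + 1)).card
                ≤ ((G.neighborFinset w).filter (fun x => deg G x = r + 1)).card := by
                  apply Finset.card_le_card
                  apply Finset.filter_subset_filter
                  exact Finset.sdiff_subset
              _ = 1 := hfw
        _ = r := by rw [Finset.sum_const, smul_eq_mul, hNcard, mul_one]
    calc (A ∩ ballF G u0).card ≤ (insert u0 (N ∪ C)).card := Finset.card_le_card hsubset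
      _ ≤ (N ∪ C).card + 1 := Finset.card_insert_le _ _
      _ ≤ (N.card + C.card) + 1 := by
          have := Finset.card_union_le N C
          omega
      _ ≤ 1 + r + r := by omega
  -- combine
  have hAcard : a ≤ 2 * r + 2 := by
    have h3 := Finset.card_sdiff_add_card_inter A (ballF G u0)
    have : A.card = a := ha.symm
    linarith
  have h2a : 2 * a = r ^ 2 + r + 2 := by omega
  nlinarith [hAcard, h2a, hr]

end Babi

/-- the order of an `(r,r+1;5)`-babi-graph is divisible by 4, and
the resulting lower bounds on `n_bb(r,r+1;5)` for `r > 2`. -/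
theorem stmt_15 (r : ℕ) :
    (∀ (n : ℕ) (G : SimpleGraph (Fin n)), IsBabi r (r + 1) 5 G → 4 ∣ n) ∧
    (2 < r →
      ((r % 4 = 0 ∨ r % 4 = 3) →
        ∀ (n : ℕ) (G : SimpleGraph (Fin n)), IsBabi r (r + 1) 5 G → r ^ 2 + r + 4 ≤ n) ∧
      ((r % 4 = 1 ∨ r % 4 = 2) →
        ∀ (n : ℕ) (G : SimpleGraph (Fin n)), IsBabi r (r + 1) 5 G → r ^ 2 + r + 6 ≤ n)) := by
  refine ⟨fun n G hB => babi_div4 hB, fun hr2 => ⟨?_, ?_⟩⟩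
  · rintro hmod n G hB
    have h4 := babi_div4 hB
    have hM := babi_moore hB
    have hmd : ∃ m, r ^ 2 + r = 4 * m := by
      rcases hmod with hm | hm
      · obtain ⟨k, hk⟩ : ∃ k, r = 4 * k := ⟨r / 4, by omega⟩
        exact ⟨4 * k * k + k, by subst hk; ring⟩
      · obtain ⟨k, hk⟩ : ∃ k, r = 4 * k + 3 := ⟨r / 4, by omega⟩
        exact ⟨4 * k * k + 7 * k + 3, by subst hk; ring⟩
    obtain ⟨m, hm2⟩ := hmd
    rw [hm2] at hM ⊢
    omega
  · rintro hmod n G hB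
    have h4 := babi_div4 hB
    have hM := babi_moore hB
    have hr3 : 3 < r := by omega
    have hNE := babi_ne hr3 hB
    have hmd : ∃ m, r ^ 2 + r = 4 * m + 2 := by
      rcases hmod with hm | hm
      · obtain ⟨k, hk⟩ : ∃ k, r = 4 * k + 1 := ⟨r / 4, by omega⟩
        exact ⟨4 * k * k + 3 * k, by subst hk; ring⟩
      · obtain ⟨k, hk⟩ : ∃ k, r = 4 * k + 2 := ⟨r / 4, by omega⟩
        exact ⟨4 * k * k + 5 * k + 1, by subst hk; ring⟩
    obtain ⟨m, hm2⟩ := hmd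
    rw [hm2] at hM hNE ⊢
    omega
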